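/- Let Z, Z' be n×n normal matrices (over ℝ or ℂ) with eigenvalues {λ_j} and {λ'_j} suitably ordered. Then there is an ordering (a permutation matching) such that √(Σ_{j=1}^n |λ'_j − λ_j|²) ≤ ‖Z' − Z‖_F. -/
import Mathlib


open scoped Matrix

attribute [local instance] Matrix.frobeniusNormedAddCommGroup

open Matrix in
lemma sq_trace' {n : ℕ} (A : Matrix (Fin n) (Fin n) ℂ) :
    ∑ i, ∑ j, (‖A i j‖ ^ 2 : ℂ) = (Aᴴ * A).trace := by
  rw [Matrix.trace, Finset.sum_comm]
  simp [Matrix.diag, Matrix.mul_apply, Matrix.conjTranspose_apply, RCLike.conj_mul]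

open Matrix in
lemma trace_inv' {n : ℕ} (B U V : Matrix (Fin n) (Fin n) ℂ)
    (hU : U ∈ Matrix.unitaryGroup (Fin n) ℂ) (hV : V ∈ Matrix.unitaryGroup (Fin n) ℂ) :
    ((V * B * Uᴴ)ᴴ * (V * B * Uᴴ)).trace = (Bᴴ * B).trace := by
  have hV1 : Vᴴ * V = 1 := hV.1
  have hU1 : Uᴴ * U = 1 := hU.1
  have : (V * B * Uᴴ)ᴴ * (V * B * Uᴴ) = U * (Bᴴ * B) * Uᴴ := by
    simp only [conjTranspose_mul, conjTranspose_conjTranspose]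
    rw [show U * (Bᴴ * Vᴴ) * (V * B * Uᴴ) = U * Bᴴ * (Vᴴ * V) * (B * Uᴴ) by
      simp only [Matrix.mul_assoc], hV1]
    simp only [Matrix.mul_assoc, Matrix.one_mul]
  rw [this, Matrix.trace_mul_comm, ← Matrix.mul_assoc, hU1, Matrix.one_mul]

set_option maxHeartbeats 1000000 in
/-- Hoffman–Wielandt theorem for normal matrices: if `Z = U diag(λ) Uᴴ` and
`Z' = V diag(λ') Vᴴ` with `U, V` unitary (i.e. `Z, Z'` are normal with eigenvalues `λ, λ'`),
then there is a matching (permutation) `σ` with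
`√(Σ_j |λ'_{σ j} - λ_j|²) ≤ ‖Z' - Z‖_F`. -/
theorem stmt5 (n : ℕ) (Z Z' U V : Matrix (Fin n) (Fin n) ℂ)
    (hU : U ∈ Matrix.unitaryGroup (Fin n) ℂ) (hV : V ∈ Matrix.unitaryGroup (Fin n) ℂ)
    (lam lam' : Fin n → ℂ)
    (hZ : Z = U * Matrix.diagonal lam * Uᴴ)
    (hZ' : Z' = V * Matrix.diagonal lam' * Vᴴ) :
    ∃ σ : Equiv.Perm (Fin n),
      Real.sqrt (∑ j, ‖lam' (σ j) - lam j‖ ^ 2) ≤ ‖Z' - Z‖ := by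
  have hU2 : U * Uᴴ = 1 := hU.2
  have hV2 : V * Vᴴ = 1 := hV.2
  set W : Matrix (Fin n) (Fin n) ℂ := Vᴴ * U with hW
  set B : Matrix (Fin n) (Fin n) ℂ :=
    Matrix.diagonal lam' * W - W * Matrix.diagonal lam with hB
  have hWmem : W ∈ Matrix.unitaryGroup (Fin n) ℂ := mul_mem (Unitary.star_mem hV) hU
  -- factorization
  have hfac : Z' - Z = V * B * Uᴴ := by
    rw [hZ, hZ', hB, hW]
    rw [Matrix.mul_sub, Matrix.sub_mul]
    congr 1
    · rw [show V * (Matrix.diagonal lam' * (Vᴴ * U)) * Uᴴ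
            = V * Matrix.diagonal lam' * Vᴴ * (U * Uᴴ) by simp only [Matrix.mul_assoc], hU2,
        Matrix.mul_one]
    · rw [show V * (Vᴴ * U * Matrix.diagonal lam) * Uᴴ
            = (V * Vᴴ) * (U * Matrix.diagonal lam * Uᴴ) by simp only [Matrix.mul_assoc], hV2,
        Matrix.one_mul]
  -- entries of B
  have hBentry : ∀ i j, B i j = (lam' i - lam j) * W i j := by
    intro i j
    simp [hB, Matrix.sub_apply, Matrix.diagonal_mul, Matrix.mul_diagonal, sub_mul, mul_comm]
  -- norm squared identity
  have hnorm2 : ‖Z' - Z‖ ^ 2 = ∑ i, ∑ j, ‖lam' i - lam j‖ ^ 2 * ‖W i j‖ ^ 2 := by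
    have h1 : (∑ i, ∑ j, (‖(Z' - Z) i j‖ ^ 2 : ℂ)) = ∑ i, ∑ j, (‖B i j‖ ^ 2 : ℂ)  := by
      rw [sq_trace', sq_trace', hfac, trace_inv' B U V hU hV]
    have h2 : (∑ i, ∑ j, ‖(Z' - Z) i j‖ ^ 2) = ∑ i, ∑ j, ‖B i j‖ ^ 2 := by
      exact_mod_cast h1
    have h3 : ‖Z' - Z‖ = Real.sqrt (∑ i, ∑ j, ‖(Z' - Z) i j‖ ^ 2) := by
      rw [Matrix.frobenius_norm_def, Real.sqrt_eq_rpow]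
      norm_num
    have h5 : (0:ℝ) ≤ ∑ i, ∑ j, ‖(Z' - Z) i j‖ ^ 2 :=
      Finset.sum_nonneg fun i _ => Finset.sum_nonneg fun j _ => by positivity
    rw [h3, Real.sq_sqrt h5, h2]
    refine Finset.sum_congr rfl fun i _ => Finset.sum_congr rfl fun j _ => ?_
    rw [hBentry, norm_mul, mul_pow]
  -- doubly stochastic matrix
  set S : Matrix (Fin n) (Fin n) ℝ := fun i j => ‖W i j‖ ^ 2 with hS
  have hWW : W * Wᴴ = 1 := hWmem.2
  have hWW' : Wᴴ * W = 1 := hWmem.1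
  have hrow : ∀ i, ∑ j, S i j = 1 := by
    intro i
    have h0 : ((W * Wᴴ) i i : ℂ) = 1 := by rw [hWW]; simp
    rw [Matrix.mul_apply] at h0
    simp only [Matrix.conjTranspose_apply] at h0
    have h4 : (∑ j, (‖W i j‖ ^ 2 : ℂ)) = 1 := by
      rw [← h0]
      refine Finset.sum_congr rfl fun j _ => ?_
      rw [RCLike.star_def, RCLike.mul_conj]; norm_cast
    exact_mod_cast h4
  have hcol : ∀ j, ∑ i, S i j = 1 := by
    intro j
    have h0 : ((Wᴴ * W) j j : ℂ) = 1 := by rw [hWW']; simp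
    rw [Matrix.mul_apply] at h0
    simp only [Matrix.conjTranspose_apply] at h0
    have h4 : (∑ i, (‖W i j‖ ^ 2 : ℂ)) = 1 := by
      rw [← h0]
      refine Finset.sum_congr rfl fun i _ => ?_
      rw [RCLike.star_def, RCLike.conj_mul]; norm_cast
    exact_mod_cast h4
  have hSds : S ∈ doublyStochastic ℝ (Fin n) := by
    rw [mem_doublyStochastic_iff_sum]
    exact ⟨fun i j => by positivity, hrow, hcol⟩
  -- Birkhoff
  obtain ⟨w, hw0, hw1, hwS⟩ := exists_eq_sum_perm_of_mem_doublyStochastic hSds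
  set c : Matrix (Fin n) (Fin n) ℝ := fun i j => ‖lam' i - lam j‖ ^ 2 with hc
  set g : Equiv.Perm (Fin n) → ℝ := fun σ => ∑ i, c i (σ i) with hg
  have key : ∀ σ : Equiv.Perm (Fin n),
      ∑ i, ∑ j, c i j * (σ.permMatrix ℝ) i j = g σ := by
    intro σ
    simp [hg, Equiv.Perm.permMatrix, PEquiv.toMatrix_apply, Equiv.toPEquiv_apply,
      Finset.sum_ite_eq, mul_ite, mul_one, mul_zero]
  -- linearity over the convex combination
  have hlin : ∑ i, ∑ j, c i j * S i j = ∑ σ : Equiv.Perm (Fin n), w σ * g σ := by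
    have e1 : ∀ i j, c i j * S i j
        = ∑ σ : Equiv.Perm (Fin n), w σ * (c i j * (Equiv.Perm.permMatrix ℝ σ) i j) := by
      intro i j
      rw [← hwS, Matrix.sum_apply, Finset.mul_sum]
      exact Finset.sum_congr rfl fun σ _ => by
        simp only [Matrix.smul_apply, smul_eq_mul]; ring
    calc ∑ i, ∑ j, c i j * S i j
        = ∑ i, ∑ j, ∑ σ : Equiv.Perm (Fin n),
            w σ * (c i j * (Equiv.Perm.permMatrix ℝ σ) i j) :=
          Finset.sum_congr rfl fun i _ => Finset.sum_congr rfl fun j _ => e1 i j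
      _ = ∑ i, ∑ σ : Equiv.Perm (Fin n), ∑ j,
            w σ * (c i j * (Equiv.Perm.permMatrix ℝ σ) i j) :=
          Finset.sum_congr rfl fun i _ => Finset.sum_comm
      _ = ∑ σ : Equiv.Perm (Fin n), ∑ i, ∑ j,
            w σ * (c i j * (Equiv.Perm.permMatrix ℝ σ) i j) := Finset.sum_comm
      _ = ∑ σ : Equiv.Perm (Fin n), w σ * g σ := by
          refine Finset.sum_congr rfl fun σ _ => ?_
          rw [← key σ, Finset.mul_sum]
          exact Finset.sum_congr rfl fun i _ => by rw [Finset.mul_sum]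
  -- pick minimizing permutation
  obtain ⟨σ₀, -, hσ₀⟩ := Finset.exists_min_image Finset.univ g ⟨1, Finset.mem_univ 1⟩
  have hmin : g σ₀ ≤ ∑ i, ∑ j, c i j * S i j := by
    rw [hlin]
    calc g σ₀ = ∑ σ : Equiv.Perm (Fin n), w σ * g σ₀ := by
          rw [← Finset.sum_mul, hw1, one_mul]
      _ ≤ ∑ σ : Equiv.Perm (Fin n), w σ * g σ :=
          Finset.sum_le_sum fun σ _ => mul_le_mul_of_nonneg_left (hσ₀ σ (Finset.mem_univ σ)) (hw0 σ)
  refine ⟨σ₀⁻¹, ?_⟩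
  have hre : (∑ j, ‖lam' (σ₀⁻¹ j) - lam j‖ ^ 2) = g σ₀ := by
    rw [hg]
    exact Fintype.sum_equiv σ₀⁻¹ _ _ fun j => by simp [hc]
  rw [hre]
  calc Real.sqrt (g σ₀) ≤ Real.sqrt (‖Z' - Z‖ ^ 2) := by
        apply Real.sqrt_le_sqrt
        rw [hnorm2]
        exact hmin
    _ = ‖Z' - Z‖ := Real.sqrt_sq (norm_nonneg _)
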